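/- Let m, n ≥ 2 be natural numbers and let f : ZMod m × ZMod m → ZMod n be a symmetric normalized 2-cocycle. Let i be the unique integer with 0 ≤ i < n representing the class S_m = Σ_{k=0}^{m−1} f(1, k) in ZMod n. Then the twisted product group ZMod n ×^f ZMod m is isomorphic to the presented group ⟨a, b ∣ a^n, b^m·a^(−i), a·b·a^(−1)·b^(−1)⟩. -/

import Mathlib

namespace TwistedAux

variable {m n : ℕ}

/-- partial sums of the cocycle `f (1, ·)` -/
def sig (f : ZMod m × ZMod m → ZMod n) (p : ℕ) : ZMod n :=
  ∑ k ∈ Finset.range p, f (1, (k : ZMod m))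

lemma sig_succ (f : ZMod m × ZMod m → ZMod n) (p : ℕ) :
    sig f (p + 1) = sig f p + f (1, (p : ZMod m)) :=
  Finset.sum_range_succ _ _

lemma f_zero (f : ZMod m × ZMod m → ZMod n) (hnorm : f (0, 0) = 0)
    (hcoc : ∀ g₁ g₂ g₃ : ZMod m,
      f (g₁, g₂) + f (g₁ + g₂, g₃) = f (g₂, g₃) + f (g₁, g₂ + g₃)) (g : ZMod m) :
    f (0, g) = 0 := by
  have := hcoc 0 0 g
  simp only [hnorm, add_zero, zero_add] at this
  linear_combination -this

lemma key (f : ZMod m × ZMod m → ZMod n)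
    (hsym : ∀ g₁ g₂ : ZMod m, f (g₁, g₂) = f (g₂, g₁))
    (hnorm : f (0, 0) = 0)
    (hcoc : ∀ g₁ g₂ g₃ : ZMod m,
      f (g₁, g₂) + f (g₁ + g₂, g₃) = f (g₂, g₃) + f (g₁, g₂ + g₃)) :
    ∀ p q : ℕ, f ((p : ZMod m), (q : ZMod m)) = sig f (p + q) - sig f p - sig f q := by
  intro p
  induction p with
  | zero =>
    intro q
    simp [sig, f_zero f hnorm hcoc]
  | succ p ih =>
    intro q
    have h := hcoc 1 (p : ZMod m) (q : ZMod m)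
    have h1 : ((p + 1 : ℕ) : ZMod m) = 1 + (p : ZMod m) := by push_cast; ring
    have h2 : ((p + q : ℕ) : ZMod m) = (p : ZMod m) + (q : ZMod m) := by push_cast; ring
    rw [h1]
    have : f (1 + (p : ZMod m), (q : ZMod m))
        = f ((p:ZMod m), (q:ZMod m)) + f (1, (p:ZMod m) + (q:ZMod m)) - f (1, (p:ZMod m)) := by
      linear_combination h
    rw [this, ih q, ← h2, show p + 1 + q = (p + q) + 1 by ring, sig_succ, sig_succ]
    ring

lemma sum_univ [NeZero m] (φ : ZMod m → ZMod n) :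
    ∑ k ∈ Finset.range m, φ (k : ZMod m) = ∑ x : ZMod m, φ x := by
  refine Finset.sum_bij' (fun k _ => (k : ZMod m)) (fun x _ => x.val) ?_ ?_ ?_ ?_ ?_
  · intro a ha; exact Finset.mem_univ _
  · intro x _; exact Finset.mem_range.2 (ZMod.val_lt x)
  · intro a ha
    exact ZMod.val_natCast_of_lt (Finset.mem_range.1 ha)
  · intro x _
    simp [ZMod.natCast_val, ZMod.cast_id]
  · intro a _; rfl

lemma sig_add_m (hm : 0 < m) (f : ZMod m × ZMod m → ZMod n) (p : ℕ) :
    sig f (p + m) = sig f p + sig f m := by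
  haveI : NeZero m := ⟨hm.ne'⟩
  rw [sig, Finset.sum_range_add]
  congr 1
  calc ∑ k ∈ Finset.range m, f (1, ((p + k : ℕ) : ZMod m))
      = ∑ k ∈ Finset.range m, f (1, (p : ZMod m) + (k : ZMod m)) := by
        apply Finset.sum_congr rfl; intro k _; push_cast; ring_nf
    _ = ∑ x : ZMod m, f (1, (p : ZMod m) + x) := by
        exact sum_univ (fun x : ZMod m => f (1, (p : ZMod m) + x))
    _ = ∑ x : ZMod m, f (1, x) := Fintype.sum_equiv (Equiv.addLeft (p : ZMod m)) _ _ (fun x => rfl)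
    _ = sig f m := (sum_univ _).symm

end TwistedAux

open TwistedAux in
/-- The twisted product `ZMod n ×^f ZMod m` is isomorphic to the presented group
`⟨a, b ∣ aⁿ, bᵐ a⁻ⁱ, ab = ba⟩`, where `i` is the representative in `{0, …, n-1}` of
`S_m = ∑_{k=0}^{m-1} f(1, k)`. -/
theorem twisted_product_iso_presented_group
    (m n : ℕ) (hm : 2 ≤ m) (hn : 2 ≤ n)
    (f : ZMod m × ZMod m → ZMod n)
    (hsym : ∀ g₁ g₂ : ZMod m, f (g₁, g₂) = f (g₂, g₁))
    (hnorm : f (0, 0) = 0)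
    (hcoc : ∀ g₁ g₂ g₃ : ZMod m,
      f (g₁, g₂) + f (g₁ + g₂, g₃) = f (g₂, g₃) + f (g₁, g₂ + g₃))
    (G : Type*) [Group G] (e : G ≃ ZMod n × ZMod m)
    (hone : e 1 = (0, 0))
    (hmul : ∀ x y : G,
      e (x * y) = ((e x).1 + (e y).1 + f ((e x).2, (e y).2), (e x).2 + (e y).2))
    (i : ℤ) (hi0 : 0 ≤ i) (hin : i < n)
    (hi : (i : ZMod n) = ∑ k ∈ Finset.range m, f (1, (k : ZMod m))) :
    Nonempty (G ≃* PresentedGroup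
      ({FreeGroup.of 0 ^ n,
        FreeGroup.of 1 ^ m * FreeGroup.of 0 ^ (-i),
        FreeGroup.of 0 * FreeGroup.of 1 * (FreeGroup.of 0)⁻¹ * (FreeGroup.of 1)⁻¹} :
        Set (FreeGroup (Fin 2)))) := by
  classical
  haveI : NeZero n := ⟨by omega⟩
  haveI : NeZero m := ⟨by omega⟩
  haveI : Fact (1 < n) := ⟨by omega⟩
  haveI : Fact (1 < m) := ⟨by omega⟩
  set rels : Set (FreeGroup (Fin 2)) :=
    {FreeGroup.of 0 ^ n,
      FreeGroup.of 1 ^ m * FreeGroup.of 0 ^ (-i),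
      FreeGroup.of 0 * FreeGroup.of 1 * (FreeGroup.of 0)⁻¹ * (FreeGroup.of 1)⁻¹} with hrels
  -- basic cocycle facts
  have hz : ∀ g : ZMod m, f (0, g) = 0 := f_zero f hnorm hcoc
  have hz' : ∀ g : ZMod m, f (g, 0) = 0 := fun g => (hsym g 0).trans (hz g)
  have hcast : ∀ z : ZMod n, ((z.val : ℕ) : ZMod n) = z := by
    intro z; simp [ZMod.natCast_val, ZMod.cast_id]
  have hcastm : ∀ z : ZMod m, ((z.val : ℕ) : ZMod m) = z := by
    intro z; simp [ZMod.natCast_val, ZMod.cast_id]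
  have hsigm : sig f m = ((i : ℤ) : ZMod n) := hi.symm
  -- the group elements A, B in G
  set A : G := e.symm (1, 0) with hAdef
  set B : G := e.symm (0, 1) with hBdef
  have heA : e A = (1, 0) := e.apply_symm_apply _
  have heB : e B = (0, 1) := e.apply_symm_apply _
  have heone : ∀ x : G, e x = (0, 0) → x = 1 := fun x hx =>
    e.injective (hx.trans hone.symm)
  have hApow : ∀ k : ℕ, e (A ^ k) = ((k : ZMod n), 0) := by
    intro k
    induction k with
    | zero => simpa using hone
    | succ k ih =>
      rw [pow_succ, hmul, ih, heA]
      refine Prod.ext ?_ ?_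
      · simp only [hz']
        push_cast
        ring
      · simp
  have hBpow : ∀ k : ℕ, e (B ^ k) = (sig f k, (k : ZMod m)) := by
    intro k
    induction k with
    | zero =>
      simpa [sig] using hone
    | succ k ih =>
      rw [pow_succ, hmul, ih, heB]
      refine Prod.ext ?_ ?_
      · show sig f k + 0 + f ((k : ZMod m), 1) = sig f (k + 1)
        rw [sig_succ, hsym]
        ring
      · show (k : ZMod m) + 1 = ((k + 1 : ℕ) : ZMod m)
        push_cast
        ring
  have hAn : A ^ n = 1 := heone _ (by rw [hApow]; simp)
  have hitoNat : ((i.toNat : ℕ) : ZMod n) = ((i : ℤ) : ZMod n) := by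
    rw [← Int.cast_natCast, Int.toNat_of_nonneg hi0]
  have hBmA : B ^ m = A ^ i.toNat := by
    apply e.injective
    rw [hBpow, hApow, hsigm, hitoNat]
    simp
  have hABc : A * B = B * A := by
    apply e.injective
    rw [hmul, hmul, heA, heB]
    simp [hz, hz']
  have hAzpow : A ^ (-i) = (A ^ i.toNat)⁻¹ := by
    rw [zpow_neg]
    congr 1
    rw [← zpow_natCast, Int.toNat_of_nonneg hi0]
  -- relations hold in G, giving ψ : P →* G
  have hlift : ∀ r ∈ rels, FreeGroup.lift ![A, B] r = 1 := by
    intro r hr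
    simp only [hrels, Set.mem_insert_iff, Set.mem_singleton_iff] at hr
    rcases hr with rfl | rfl | rfl
    · rw [map_pow, FreeGroup.lift_apply_of]
      simpa using hAn
    · rw [map_mul, map_pow, map_zpow, FreeGroup.lift_apply_of, FreeGroup.lift_apply_of]
      simp only [Matrix.cons_val_zero, Matrix.cons_val_one, Matrix.head_cons]
      rw [hAzpow, hBmA, mul_inv_cancel]
    · simp only [map_mul, map_inv, FreeGroup.lift_apply_of, Matrix.cons_val_zero,
        Matrix.cons_val_one, Matrix.head_cons]
      rw [hABc]
      group
  set ψ : PresentedGroup rels →* G := PresentedGroup.toGroup hlift with hψdef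
  have hψa : ψ (PresentedGroup.of 0) = A := by
    rw [hψdef, PresentedGroup.toGroup.of]; rfl
  have hψb : ψ (PresentedGroup.of 1) = B := by
    rw [hψdef, PresentedGroup.toGroup.of]; rfl
  -- relations in the presented group P
  set a : PresentedGroup rels := PresentedGroup.of 0 with hadef
  set b : PresentedGroup rels := PresentedGroup.of 1 with hbdef
  have hrel : ∀ r ∈ rels, PresentedGroup.mk rels r = 1 := fun r hr =>
    (QuotientGroup.eq_one_iff r).2 (Subgroup.subset_normalClosure hr)
  have ha_n : a ^ n = 1 := by
    have h1 := hrel _ (show FreeGroup.of 0 ^ n ∈ rels from Set.mem_insert _ _)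
    rwa [map_pow] at h1
  have hb_rel : b ^ m * a ^ (-i) = 1 := by
    have h2 := hrel _ (show FreeGroup.of 1 ^ m * FreeGroup.of 0 ^ (-i) ∈ rels from
      Set.mem_insert_of_mem _ (Set.mem_insert _ _))
    rwa [map_mul, map_pow, map_zpow] at h2
  have hcomrel : a * b * a⁻¹ * b⁻¹ = 1 := by
    have h3 := hrel _ (show FreeGroup.of 0 * FreeGroup.of 1 * (FreeGroup.of 0)⁻¹ *
        (FreeGroup.of 1)⁻¹ ∈ rels from
      Set.mem_insert_of_mem _ (Set.mem_insert_of_mem _ rfl))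
    rwa [map_mul, map_mul, map_mul, map_inv, map_inv] at h3
  have hcom : a * b = b * a := by
    calc a * b = (a * b * a⁻¹ * b⁻¹) * (b * a) := by group
    _ = b * a := by rw [hcomrel, one_mul]
  have hcab : ∀ s t : ℕ, b ^ t * a ^ s = a ^ s * b ^ t := by
    intro s t
    have hc : Commute a b := hcom
    exact ((hc.pow_pow s t).eq).symm
  have hazpow : a ^ (-i) = (a ^ i.toNat)⁻¹ := by
    rw [zpow_neg]
    congr 1
    rw [← zpow_natCast, Int.toNat_of_nonneg hi0]
  have hbm : b ^ m = a ^ i.toNat := by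
    rw [hazpow] at hb_rel
    exact (mul_inv_eq_one.mp hb_rel)
  have hmodpow : ∀ p : ℕ, a ^ p = a ^ (p % n) := by
    intro p
    conv_lhs => rw [← Nat.div_add_mod p n]
    rw [pow_add, pow_mul, ha_n, one_pow, one_mul]
  have hpow_a : ∀ p q : ℕ, (p : ZMod n) = (q : ZMod n) → a ^ p = a ^ q := by
    intro p q h
    rw [ZMod.natCast_eq_natCast_iff] at h
    rw [hmodpow p, hmodpow q, h]
  have hmerge : ∀ s t s' t' : ℕ,
      (a ^ s * b ^ t) * (a ^ s' * b ^ t') = a ^ (s + s') * b ^ (t + t') := by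
    intro s t s' t'
    rw [pow_add, pow_add]
    calc a ^ s * b ^ t * (a ^ s' * b ^ t')
        = a ^ s * (b ^ t * a ^ s') * b ^ t' := by group
    _ = a ^ s * (a ^ s' * b ^ t) * b ^ t' := by rw [hcab s' t]
    _ = a ^ s * a ^ s' * (b ^ t * b ^ t') := by group
  -- the map χ : G → P
  set χ : G → PresentedGroup rels := fun x =>
    a ^ ((e x).1 - sig f ((e x).2.val)).val * b ^ ((e x).2.val) with hχdef
  have hχmul : ∀ x y : G, χ (x * y) = χ x * χ y := by
    intro x y
    rw [hχdef]
    simp only [hmul x y]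
    set x1 := (e x).1
    set x2 := (e x).2
    set y1 := (e y).1
    set y2 := (e y).2
    set u := x2.val with hu
    set v := y2.val with hv
    set w := (x2 + y2).val with hwdef
    have hux : ((u : ℕ) : ZMod m) = x2 := hcastm x2
    have hvy : ((v : ℕ) : ZMod m) = y2 := hcastm y2
    have hkuv : f (x2, y2) = sig f (u + v) - sig f u - sig f v := by
      have hk := key f hsym hnorm hcoc u v
      rwa [hux, hvy] at hk
    have hw : w = (u + v) % m := ZMod.val_add x2 y2
    have hum : u < m := ZMod.val_lt x2
    have hvm : v < m := ZMod.val_lt y2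
    rw [hmerge]
    rcases Nat.lt_or_ge (u + v) m with hlt | hge
    · have hw' : w = u + v := by rw [hw, Nat.mod_eq_of_lt hlt]
      rw [← hw']
      congr 1
      apply hpow_a
      push_cast [hcast]
      rw [hw', hkuv]
      ring
    · have hw' : u + v = w + m := by
        rw [hw, Nat.mod_eq_sub_mod hge, Nat.mod_eq_of_lt (by omega)]
        omega
      rw [hw']
      rw [pow_add b w m]
      rw [hbm]
      rw [hcab i.toNat w, ← mul_assoc, ← pow_add]
      congr 1
      apply hpow_a
      push_cast [hcast]
      rw [hkuv, hw', sig_add_m (show 0 < m by omega) f w, hsigm, hitoNat]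
      ring
  have hχone : χ 1 = 1 := by
    rw [hχdef]
    simp [hone, sig, Finset.sum_range_zero]
  -- ψ ∘ χ = id on G
  have hli : ∀ x : G, ψ (χ x) = x := by
    intro x
    apply e.injective
    rw [hχdef]
    simp only [map_mul, map_pow, hψa, hψb]
    rw [hmul, hApow, hBpow]
    refine Prod.ext ?_ ?_
    · show (((e x).1 - sig f ((e x).2.val)).val : ZMod n) + sig f ((e x).2.val)
        + f (0, ((e x).2.val : ZMod m)) = (e x).1
      rw [hcast, hz]
      ring
    · show (0 : ZMod m) + (((e x).2.val : ℕ) : ZMod m) = (e x).2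
      rw [hcastm]
      ring
  -- χ as a monoid hom
  set χh : G →* PresentedGroup rels :=
    { toFun := χ, map_one' := hχone, map_mul' := hχmul } with hχhdef
  have hχA : χ A = a := by
    rw [hχdef]
    simp only [heA]
    rw [show ((0 : ZMod m)).val = 0 from ZMod.val_zero]
    show a ^ ((1 : ZMod n) - sig f 0).val * b ^ 0 = a
    rw [show sig f 0 = 0 from Finset.sum_range_zero _, sub_zero, ZMod.val_one, pow_one,
      pow_zero, mul_one]
  have hχB : χ B = b := by
    rw [hχdef]
    simp only [heB]
    rw [show ((1 : ZMod m)).val = 1 from ZMod.val_one m]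
    show a ^ ((0 : ZMod n) - sig f 1).val * b ^ 1 = b
    have hs1 : sig f 1 = 0 := by
      rw [sig, Finset.sum_range_one]
      simpa using hz' 1
    rw [hs1, sub_zero, ZMod.val_zero, pow_zero, one_mul, pow_one]
  have hri : χh.comp ψ = MonoidHom.id (PresentedGroup rels) := by
    apply PresentedGroup.ext
    intro x0
    fin_cases x0
    · show χh (ψ (PresentedGroup.of 0)) = PresentedGroup.of 0
      rw [hψa]
      exact hχA
    · show χh (ψ (PresentedGroup.of 1)) = PresentedGroup.of 1
      rw [hψb]
      exact hχB
  exact ⟨{ toFun := χ, invFun := ψ, left_inv := hli,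
           right_inv := fun p => DFunLike.congr_fun hri p, map_mul' := hχmul }⟩
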